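/- Let G be a finitely generated group with a nontrivial cyclic subgroup C = ⟨c⟩ and an element s with s·cᵐ·s⁻¹ = cⁿ where |m| ≠ |n| and m,n ≠ 0 (i.e., G contains a Baumslag–Solitar configuration BS(m,n) with m ≠ ±n, with c of infinite order). Then the subgroup ⟨c⟩ is not separable in G. -/

import Mathlib

open Subgroup

-- In a finite group, if t * x^m * t⁻¹ = x^n then x^m ∈ zpowers (x^n).
lemma bs_aux_fin {Q : Type*} [Group Q] [Finite Q] (x t : Q) (m n : ℤ)
    (h : t * x ^ m * t⁻¹ = x ^ n) : x ^ m ∈ Subgroup.zpowers (x ^ n) := by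
  set d : ℤ := (orderOf x : ℤ) with hd
  have hd0 : d ≠ 0 := by
    have := orderOf_pos x
    rw [hd]; omega
  set E : ℤ := (Int.gcd d n : ℤ) with hE
  have hE0 : E ≠ 0 := by
    simp only [hE]
    exact_mod_cast fun h0 => hd0 (Int.gcd_eq_zero_iff.mp (by exact_mod_cast h0)).1
  have hEd : E ∣ d := Int.gcd_dvd_left d n
  have hEn : E ∣ n := Int.gcd_dvd_right d n
  -- E divides m
  have hEm : E ∣ m := by
    obtain ⟨k, hk⟩ := hEd
    have h1 : x ^ (n * k) = 1 := by
      rw [← orderOf_dvd_iff_zpow_eq_one, ← hd]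
      obtain ⟨l, hl⟩ := hEn
      exact ⟨l, by rw [hk, hl]; ring⟩
    have h2 : x ^ (m * k) = 1 := by
      have ht : (x ^ n) ^ k = 1 := by rw [← zpow_mul]; exact h1
      rw [← h, conj_zpow] at ht
      have ht2 := congrArg (fun z => t⁻¹ * z * t) ht
      simp only [mul_assoc, inv_mul_cancel_left, mul_one, mul_inv_cancel, inv_mul_cancel] at ht2
      rw [← zpow_mul] at ht2
      simpa using ht2
    have h3 : d ∣ m * k := by rw [hd, orderOf_dvd_iff_zpow_eq_one]; exact h2
    obtain ⟨q, hq⟩ := h3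
    -- m * k = d * q, d = E * k, so m * k = E * k * q, k ≠ 0
    have hk0 : k ≠ 0 := fun h0 => hd0 (by rw [hk, h0, mul_zero])
    refine ⟨q, ?_⟩
    have : m * k = E * q * k := by rw [hq, hk]; ring
    exact mul_right_cancel₀ hk0 this
  -- x ^ E ∈ zpowers (x ^ n) by Bezout
  have hxE : x ^ E ∈ Subgroup.zpowers (x ^ n) := by
    have hbez : E = d * Int.gcdA d n + n * Int.gcdB d n := by
      rw [hE]; exact Int.gcd_eq_gcd_ab d n
    refine Subgroup.mem_zpowers_iff.mpr ⟨Int.gcdB d n, ?_⟩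
    have hxd : x ^ (d * Int.gcdA d n) = 1 := by
      rw [← orderOf_dvd_iff_zpow_eq_one, ← hd]; exact Dvd.intro _ rfl
    rw [← zpow_mul, hbez, zpow_add, hxd, one_mul]
  obtain ⟨q, hq⟩ := hEm
  obtain ⟨k0, hk0⟩ := Subgroup.mem_zpowers_iff.mp hxE
  exact Subgroup.mem_zpowers_iff.mpr ⟨k0 * q, by
    rw [← zpow_mul, ← mul_assoc, zpow_mul, zpow_mul, hk0, ← zpow_mul, ← hq]⟩

-- the candidate element lies in every finite-index subgroup containing zpowers c
lemma bs_aux_mem {G : Type*} [Group G] (c s : G) (m n : ℤ)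
    (hconj : s * c ^ m * s⁻¹ = c ^ n) (K : Subgroup G)
    (hK : Subgroup.zpowers c ≤ K) (hFI : K.FiniteIndex) :
    s⁻¹ * c ^ m * s ∈ K := by
  haveI := hFI
  haveI : K.normalCore.FiniteIndex := Subgroup.finiteIndex_normalCore K
  haveI : Finite (G ⧸ K.normalCore) := Subgroup.finite_quotient_of_finiteIndex
  set φ := QuotientGroup.mk' K.normalCore with hφ
  have hrel : φ s * (φ c) ^ m * (φ s)⁻¹ = (φ c) ^ n := by
    rw [← map_zpow, ← map_zpow, ← map_inv, ← map_mul, ← map_mul, hconj]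
  have hmem := bs_aux_fin (φ c) (φ s) m n hrel
  -- x^m ∈ zpowers (x^n) = t (zpowers x^m) t⁻¹ hence t⁻¹ x^m t ∈ zpowers x
  obtain ⟨k, hk⟩ := Subgroup.mem_zpowers_iff.mp hmem
  -- hk : (φ c ^ n) ^ k = φ c ^ m
  have h2 : (φ s)⁻¹ * (φ c) ^ m * φ s = (φ c) ^ (m * k) := by
    rw [← hk, ← hrel, conj_zpow, ← zpow_mul]
    group
  have h3 : φ (s⁻¹ * c ^ m * s) ∈ Subgroup.zpowers (φ c) := by
    rw [map_mul, map_mul, map_inv, map_zpow, h2]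
    exact Subgroup.zpow_mem_zpowers _ _
  have h4 : φ (s⁻¹ * c ^ m * s) ∈ Subgroup.map φ K := by
    rw [← MonoidHom.map_zpowers] at h3
    exact Subgroup.map_mono hK h3
  have h5 : s⁻¹ * c ^ m * s ∈ Subgroup.comap φ (Subgroup.map φ K) := h4
  rw [Subgroup.comap_map_eq, QuotientGroup.ker_mk'] at h5
  rwa [sup_of_le_left (Subgroup.normalCore_le K)] at h5

lemma bs_descent {G : Type*} [Group G] (c : G) (hc : ¬ IsOfFinOrder c) :
    ∀ (N : ℕ) (s : G) (m n : ℤ), m.natAbs ≤ N → m ≠ 0 → |m| < |n| →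
    s * c ^ m * s⁻¹ = c ^ n →
    ∃ g, g ∉ Subgroup.zpowers c ∧
      ∀ K : Subgroup G, Subgroup.zpowers c ≤ K → K.FiniteIndex → g ∈ K := by
  have hinj : Function.Injective fun k : ℤ => c ^ k :=
    injective_zpow_iff_not_isOfFinOrder.mpr hc
  intro N
  induction N with
  | zero => intro s m n hle hm _ _; exact absurd (Int.natAbs_eq_zero.mp (Nat.le_zero.mp hle)) hm
  | succ N ih =>
    intro s m n hle hm hlt hconj
    by_cases hg : s⁻¹ * c ^ m * s ∈ Subgroup.zpowers c
    · obtain ⟨j, hj⟩ := Subgroup.mem_zpowers_iff.mp hg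
      -- hj : c ^ j = s⁻¹ * c ^ m * s
      have h1 : s * c ^ j * s⁻¹ = c ^ m := by rw [hj]; group
      have h2 : c ^ (n * j) = c ^ (m * m) := by
        have ha : s * c ^ (m * j) * s⁻¹ = c ^ (n * j) := by
          rw [zpow_mul, zpow_mul, ← hconj, conj_zpow]
        have hb : (s⁻¹ * c ^ m * s) ^ m = s⁻¹ * c ^ (m * m) * s := by
          rw [show (s : G)⁻¹ * c ^ m * s = s⁻¹ * c ^ m * (s⁻¹)⁻¹ from by rw [inv_inv],
            conj_zpow, inv_inv, ← zpow_mul]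
        rw [← ha, mul_comm m j, zpow_mul, hj, hb]
        group
      have hnj : n * j = m * m := hinj h2
      have hj0 : j ≠ 0 := by
        rintro rfl
        apply hm
        have : m * m = 0 := by rw [← hnj]; ring
        exact (mul_self_eq_zero.mp this)
      have hjm : |j| < |m| := by
        by_contra hcon
        push_neg at hcon
        have habs : |n| * |j| = |m| * |m| := by rw [← abs_mul, ← abs_mul, hnj]
        have h0m : 0 < |m| := abs_pos.mpr hm
        nlinarith [abs_nonneg j, abs_nonneg n]
      have hjle : j.natAbs ≤ N := by
        have h1 : j.natAbs < m.natAbs := by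
          rwa [Int.abs_eq_natAbs, Int.abs_eq_natAbs, Nat.cast_lt] at hjm
        omega
      exact ih s j m hjle hj0 hjm h1
    · exact ⟨s⁻¹ * c ^ m * s, hg, fun K hK hFI => bs_aux_mem c s m n hconj K hK hFI⟩

def SeparableSubgroup {G : Type*} [Group G] (H : Subgroup G) : Prop :=
  H = ⨅ K ∈ {K : Subgroup G | H ≤ K ∧ K.FiniteIndex}, K

theorem bs_subgroup_not_separable {G : Type*} [Group G] (hfg : Group.FG G)
    (c s : G) (hc : ¬ IsOfFinOrder c) (m n : ℤ) (hm : m ≠ 0) (hn : n ≠ 0)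
    (hmn : |m| ≠ |n|) (hconj : s * c ^ m * s⁻¹ = c ^ n) :
    ¬ SeparableSubgroup (Subgroup.zpowers c) := by
  intro hsep
  have hmain : ∃ g, g ∉ Subgroup.zpowers c ∧
      ∀ K : Subgroup G, Subgroup.zpowers c ≤ K → K.FiniteIndex → g ∈ K := by
    rcases lt_or_gt_of_ne hmn with h | h
    · exact bs_descent c hc m.natAbs s m n le_rfl hm h hconj
    · have hconj' : s⁻¹ * c ^ n * (s⁻¹)⁻¹ = c ^ m := by
        rw [inv_inv, ← hconj]; group
      exact bs_descent c hc n.natAbs s⁻¹ n m le_rfl hn h hconj'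
  obtain ⟨g, hg1, hg2⟩ := hmain
  apply hg1
  rw [hsep]
  simp only [Subgroup.mem_iInf, Set.mem_setOf_eq]
  exact fun K hK => hg2 K hK.1 hK.2
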